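/- Any welfare maximizer is a Nash equilibrium of the experiment-choice game under the VCG stage-2 rule: if μ* ∈ D_1 × ⋯ × D_n maximizes W over D_1 × ⋯ × D_n, then for every bidder i and every ν ∈ D_i, Π_i(μ*) ≥ Π_i(ν, μ*_{−i}). -/
import Mathlib


open MeasureTheory Finset

noncomputable section

lemma norm_ciSup_le_max {ι : Type*} [Finite ι] [Nonempty ι] {a b : ℝ} {t : ι → ℝ}
    (h : ∀ j, t j ∈ Set.Icc a b) : ‖⨆ j, t j‖ ≤ max ‖a‖ ‖b‖ := by
  have hbdd : BddAbove (Set.range t) := (Set.finite_range t).bddAbove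
  have h1 : (⨆ j, t j) ≤ b := ciSup_le fun j => (h j).2
  have h2 : a ≤ ⨆ j, t j := le_trans (h (Classical.arbitrary ι)).1 (le_ciSup hbdd _)
  rw [Real.norm_eq_abs, abs_le]
  constructor
  · have := neg_abs_le a
    have := le_max_left |a| |b|
    simp only [Real.norm_eq_abs]
    linarith
  · have := le_abs_self b
    have := le_max_right |a| |b|
    simp only [Real.norm_eq_abs]
    linarith

lemma integrable_pi_of_bound {ι : Type*} [Fintype ι] {a b : ℝ} (μ : ι → Measure ℝ)
    (hp : ∀ j, IsProbabilityMeasure (μ j)) (h1 : ∀ j, μ j (Set.Icc a b) = 1)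
    {f : (ι → ℝ) → ℝ} (hf : Measurable f) {C : ℝ}
    (hb : ∀ t : ι → ℝ, (∀ j, t j ∈ Set.Icc a b) → ‖f t‖ ≤ C) :
    Integrable f (Measure.pi μ) := by
  haveI := hp
  have hS : Measure.pi μ (Set.pi Set.univ fun _ => Set.Icc a b) = 1 := by
    rw [Measure.pi_pi]; simp [h1]
  have hcompl : Measure.pi μ (Set.pi Set.univ fun _ => Set.Icc a b)ᶜ = 0 := by
    rw [measure_compl (MeasurableSet.univ_pi fun _ => measurableSet_Icc) (by simp), hS]
    simp
  have hae : ∀ᵐ t ∂Measure.pi μ, ‖f t‖ ≤ C := by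
    have hmem : (Set.pi Set.univ fun _ : ι => Set.Icc a b) ∈ ae (Measure.pi μ) :=
      mem_ae_iff.mpr hcompl
    refine Filter.eventually_of_mem hmem fun t ht => hb t fun j => Set.mem_univ_pi.mp ht j
  exact (integrable_const C).mono' hf.aestronglyMeasurable hae

lemma integral_pi_subtype {n : ℕ} (i : Fin n) (μ : Fin n → Measure ℝ)
    (hp : ∀ j, IsProbabilityMeasure (μ j)) {g : ({j : Fin n // j ≠ i} → ℝ) → ℝ}
    (hg : Measurable g) :
    ∫ t, g (fun j => t j.1) ∂Measure.pi μ
      = ∫ u, g u ∂Measure.pi (fun j : {j : Fin n // j ≠ i} => μ j.1) := by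
  classical
  haveI := hp
  haveI : ∀ j : {j : Fin n // j ≠ i}, IsProbabilityMeasure
      ((fun j : {j : Fin n // j ≠ i} => μ j.1) j) := fun j => hp j
  haveI : ∀ j : {j : Fin n // ¬ j ≠ i}, IsProbabilityMeasure
      ((fun j : {j : Fin n // ¬ j ≠ i} => μ j.1) j) := fun j => hp j
  have hmp := measurePreserving_piEquivPiSubtypeProd (μ := μ)
    (α := fun _ : Fin n => ℝ) (fun j => j ≠ i)
  have h1 := hmp.integral_comp' (fun x : ({j : Fin n // j ≠ i} → ℝ) × ({j : Fin n // ¬ j ≠ i} → ℝ)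
    => g x.1)
  have h2 : ∫ x, g x.1
      ∂((Measure.pi fun j : {j : Fin n // j ≠ i} => μ j.1).prod
        (Measure.pi fun j : {j : Fin n // ¬ j ≠ i} => μ j.1))
      = ∫ u, g u ∂Measure.pi (fun j : {j : Fin n // j ≠ i} => μ j.1) := by
    rw [← integral_map measurable_fst.aemeasurable hg.aestronglyMeasurable]
    congr 1
    rw [show Measure.map Prod.fst
        ((Measure.pi fun j : {j : Fin n // j ≠ i} => μ j.1).prod
          (Measure.pi fun j : {j : Fin n // ¬ j ≠ i} => μ j.1))
      = ((Measure.pi fun j : {j : Fin n // j ≠ i} => μ j.1).prod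
          (Measure.pi fun j : {j : Fin n // ¬ j ≠ i} => μ j.1)).fst from rfl,
      Measure.fst_prod]
  rw [← h2, ← h1]
  rfl

/-- The highest opposing bid `max_{j ≠ i} t j`. -/
def maxOpp {n : ℕ} (t : Fin n → ℝ) (i : Fin n) : ℝ :=
  ⨆ j : {j : Fin n // j ≠ i}, t j

/-- Expected welfare of an experiment profile under the VCG stage-2 rule:
expected maximum bid minus total information costs. -/
def Wel {n : ℕ} (c : Fin n → Measure ℝ → ℝ) (μ : Fin n → Measure ℝ) : ℝ :=
  (∫ t, (⨆ k, t k) ∂ Measure.pi μ) - ∑ j, c j (μ j)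

/-- Bidder `i`'s expected net payoff under the VCG stage-2 rule: her expected
VCG payoff minus her information cost. -/
def Pnet {n : ℕ} (c : Fin n → Measure ℝ → ℝ) (μ : Fin n → Measure ℝ)
    (i : Fin n) : ℝ :=
  (∫ t, ((⨆ k, t k) - maxOpp t i) ∂ Measure.pi μ) - c i (μ i)

/-- Any welfare maximizer is a Nash equilibrium of the experiment-choice game
under the VCG stage-2 rule: if `μ*` maximizes `W` over `D_1 × ⋯ × D_n`, then no
bidder can gain by unilaterally deviating to another experiment in her set. -/
theorem welfare_maximizer_is_nash (n : ℕ) (hn : 2 ≤ n) (a b : ℝ) (hab : a < b)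
    (Dset : Fin n → Set (Measure ℝ)) (hDne : ∀ j, (Dset j).Nonempty)
    (hDprob : ∀ j, ∀ μ ∈ Dset j, IsProbabilityMeasure μ ∧ μ (Set.Icc a b) = 1)
    (c : Fin n → Measure ℝ → ℝ)
    (μstar : Fin n → Measure ℝ) (hμstar : ∀ j, μstar j ∈ Dset j)
    (hmax : ∀ μ : Fin n → Measure ℝ, (∀ j, μ j ∈ Dset j) → Wel c μ ≤ Wel c μstar) :
    ∀ i : Fin n, ∀ ν ∈ Dset i,
      Pnet c (Function.update μstar i ν) i ≤ Pnet c μstar i := by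
  classical
  intro i ν hν
  set μ' := Function.update μstar i ν with hμ'def
  have hμ'mem : ∀ j, μ' j ∈ Dset j := by
    intro j
    rcases eq_or_ne j i with rfl | hj
    · simpa [hμ'def] using hν
    · simpa [hμ'def, Function.update_of_ne hj] using hμstar j
  -- nonemptiness of the opponent set
  haveI : Nonempty (Fin n) := ⟨i⟩
  have hne : ∃ j : Fin n, j ≠ i := by
    rcases eq_or_ne i ⟨0, by omega⟩ with h0 | h0
    · exact ⟨⟨1, by omega⟩, by rw [h0]; simp [Fin.ext_iff]⟩
    · exact ⟨⟨0, by omega⟩, fun h => h0 h.symm⟩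
  haveI : Nonempty {j : Fin n // j ≠ i} := hne.elim fun j hj => ⟨⟨j, hj⟩⟩
  -- measurability
  have hF : Measurable fun t : Fin n → ℝ => ⨆ k, t k :=
    Measurable.iSup fun k => measurable_pi_apply k
  have hg : Measurable fun u : {j : Fin n // j ≠ i} → ℝ => ⨆ j, u j :=
    Measurable.iSup fun j => measurable_pi_apply j
  have hG : Measurable fun t : Fin n → ℝ => maxOpp t i :=
    Measurable.iSup fun j => measurable_pi_apply (j : Fin n)
  -- integrability and Pnet decomposition, for any admissible profile
  have key : ∀ μ : Fin n → Measure ℝ, (∀ j, μ j ∈ Dset j) →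
      Pnet c μ i = (∫ t, (⨆ k, t k) ∂Measure.pi μ)
        - (∫ t, maxOpp t i ∂Measure.pi μ) - c i (μ i) := by
    intro μ hμ
    have hp : ∀ j, IsProbabilityMeasure (μ j) := fun j => (hDprob j _ (hμ j)).1
    have h1 : ∀ j, μ j (Set.Icc a b) = 1 := fun j => (hDprob j _ (hμ j)).2
    have intF : Integrable (fun t : Fin n → ℝ => ⨆ k, t k) (Measure.pi μ) :=
      integrable_pi_of_bound μ hp h1 hF (C := max ‖a‖ ‖b‖)
        fun t ht => norm_ciSup_le_max ht
    have intG : Integrable (fun t : Fin n → ℝ => maxOpp t i) (Measure.pi μ) :=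
      integrable_pi_of_bound μ hp h1 hG (C := max ‖a‖ ‖b‖)
        fun t ht => norm_ciSup_le_max (fun j : {j : Fin n // j ≠ i} => ht j)
    rw [Pnet, integral_sub intF intG]
  -- the opponents' integral does not depend on bidder i's choice
  have hGint : (∫ t, maxOpp t i ∂Measure.pi μ') = ∫ t, maxOpp t i ∂Measure.pi μstar := by
    have hp' : ∀ j, IsProbabilityMeasure (μ' j) := fun j => (hDprob j _ (hμ'mem j)).1
    have hp : ∀ j, IsProbabilityMeasure (μstar j) := fun j => (hDprob j _ (hμstar j)).1
    have e1 := integral_pi_subtype i μ' hp' (g := fun u : {j : Fin n // j ≠ i} → ℝ => ⨆ j, u j) hg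
    have e2 := integral_pi_subtype i μstar hp (g := fun u : {j : Fin n // j ≠ i} → ℝ => ⨆ j, u j) hg
    have hpi : (Measure.pi fun j : {j : Fin n // j ≠ i} => μ' j.1)
        = Measure.pi fun j : {j : Fin n // j ≠ i} => μstar j.1 := by
      congr 1
      funext j
      exact Function.update_of_ne j.2 _ _
    calc (∫ t, maxOpp t i ∂Measure.pi μ')
        = ∫ u, (⨆ j : {j : Fin n // j ≠ i}, u j) ∂Measure.pi
            (fun j : {j : Fin n // j ≠ i} => μ' j.1) := e1
      _ = ∫ u, (⨆ j : {j : Fin n // j ≠ i}, u j) ∂Measure.pi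
            (fun j : {j : Fin n // j ≠ i} => μstar j.1) := by rw [hpi]
      _ = ∫ t, maxOpp t i ∂Measure.pi μstar := e2.symm
  -- cost sums off i agree
  have hsum : ∑ j, c j (μ' j) - c i (μ' i) = ∑ j, c j (μstar j) - c i (μstar i) := by
    rw [← Finset.add_sum_erase univ (fun j => c j (μ' j)) (mem_univ i),
      ← Finset.add_sum_erase univ (fun j => c j (μstar j)) (mem_univ i)]
    simp only [add_sub_cancel_left]
    exact Finset.sum_congr rfl fun j hj => by
      rw [hμ'def, Function.update_of_ne (Finset.ne_of_mem_erase hj)]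
  have hW := hmax μ' hμ'mem
  rw [Wel, Wel] at hW
  rw [key μ' hμ'mem, key μstar hμstar]
  linarith
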